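/- Let n ≥ 1, let g ∈ GL_n(L), and let a_1 ≤ a_2 ≤ ⋯ ≤ a_n be integers. Then there exist matrices U, V ∈ GL_n(𝒪_L) with g = U · diag(t^{a_1}, …, t^{a_n}) · V if and only if, for every k = 1, …, n, the minimum of v(δ) over all nonzero k×k minors δ of g (determinants of k×k submatrices obtained by choosing k rows and k columns) equals a_1 + a_2 + ⋯ + a_k. -/

import Mathlib

open Matrix

section CartanAux
variable {L : Type*} [Field L]

open Classical in
noncomputable def wv (v : L → ℤ) (x : L) : WithTop ℤ := if x = 0 then ⊤ else (v x : WithTop ℤ)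

variable {v : L → ℤ} {t : L}

lemma wv_zero : wv v (0 : L) = ⊤ := by simp [wv]

lemma wv_of_ne {x : L} (h : x ≠ 0) : wv v x = (v x : WithTop ℤ) := by simp [wv, h]

lemma wv_eq_top_iff {x : L} : wv v x = ⊤ ↔ x = 0 := by
  by_cases h : x = 0 <;> simp [wv, h]

section basic
variable (hv_mul : ∀ x y : L, x ≠ 0 → y ≠ 0 → v (x * y) = v x + v y)
include hv_mul

lemma v_one' : v (1 : L) = 0 := by
  have := hv_mul 1 1 one_ne_zero one_ne_zero
  simp at this; omega

lemma wv_one : wv v (1 : L) = 0 := by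
  rw [wv_of_ne one_ne_zero, v_one' hv_mul]; rfl

lemma wv_mul (x y : L) : wv v (x * y) = wv v x + wv v y := by
  by_cases hx : x = 0
  · simp [hx, wv_zero]
  by_cases hy : y = 0
  · simp [hy, wv_zero]
  rw [wv_of_ne hx, wv_of_ne hy, wv_of_ne (mul_ne_zero hx hy), hv_mul x y hx hy]
  push_cast; rfl

lemma v_neg_one : v (-1 : L) = 0 := by
  have := hv_mul (-1) (-1) (by norm_num) (by norm_num)
  simp [v_one' hv_mul] at this; omega

lemma wv_neg (x : L) : wv v (-x) = wv v x := by
  rw [show -x = -1 * x by ring, wv_mul hv_mul, wv_of_ne (by norm_num : (-1:L) ≠ 0),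
    v_neg_one hv_mul]
  simp

lemma v_inv {x : L} (hx : x ≠ 0) : v x⁻¹ = - v x := by
  have := hv_mul x x⁻¹ hx (inv_ne_zero hx)
  rw [mul_inv_cancel₀ hx, v_one' hv_mul] at this; omega

end basic

lemma wv_add_ge (hv_add : ∀ x y : L, x ≠ 0 → y ≠ 0 → x + y ≠ 0 → min (v x) (v y) ≤ v (x + y))
    (x y : L) : min (wv v x) (wv v y) ≤ wv v (x + y) := by
  by_cases hx : x = 0
  · simp [hx, wv_zero]
  by_cases hy : y = 0
  · simp [hy, wv_zero]
  by_cases hxy : x + y = 0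
  · simp [hxy, wv_zero]
  rw [wv_of_ne hx, wv_of_ne hy, wv_of_ne hxy]
  have := hv_add x y hx hy hxy
  rw [← WithTop.coe_min]
  exact_mod_cast this

lemma wv_sum (hv_add : ∀ x y : L, x ≠ 0 → y ≠ 0 → x + y ≠ 0 → min (v x) (v y) ≤ v (x + y))
    {ι : Type*} (s : Finset ι) (f : ι → L) (β : WithTop ℤ)
    (h : ∀ i ∈ s, β ≤ wv v (f i)) : β ≤ wv v (∑ i ∈ s, f i) := by
  induction s using Finset.cons_induction with
  | empty => simp [wv_zero]
  | cons i s hi ih =>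
    rw [Finset.sum_cons]
    refine le_trans ?_ (wv_add_ge hv_add _ _)
    simp only [le_min_iff]
    exact ⟨h i (Finset.mem_cons_self i s), ih fun j hj => h j (Finset.mem_cons_of_mem hj)⟩

lemma wv_prod (hv_mul : ∀ x y : L, x ≠ 0 → y ≠ 0 → v (x * y) = v x + v y)
    {ι : Type*} (s : Finset ι) (f : ι → L) :
    wv v (∏ i ∈ s, f i) = ∑ i ∈ s, wv v (f i) := by
  induction s using Finset.cons_induction with
  | empty => simpa using wv_one hv_mul
  | cons i s hi ih => rw [Finset.prod_cons, Finset.sum_cons, wv_mul hv_mul, ih]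

section tpow
variable (hv_mul : ∀ x y : L, x ≠ 0 → y ≠ 0 → v (x * y) = v x + v y)
  (ht0 : t ≠ 0) (ht1 : v t = 1)
include hv_mul ht0 ht1

lemma v_zpow (m : ℤ) : v (t ^ m) = m := by
  induction m using Int.induction_on with
  | zero => simpa using v_one' hv_mul
  | succ m ih =>
    rw [show ((m:ℤ)+1) = (m:ℤ) + 1 by ring, zpow_add₀ ht0, zpow_one,
      hv_mul _ _ (zpow_ne_zero _ ht0) ht0, ih, ht1]
  | pred m ih =>
    have h : t ^ (-(m:ℤ) - 1) * t = t ^ (-(m:ℤ)) := by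
      rw [mul_comm, ← zpow_one_add₀ ht0]; congr 1; ring
    have := hv_mul (t ^ (-(m:ℤ)-1)) t (zpow_ne_zero _ ht0) ht0
    rw [h, ih, ht1] at this; omega

lemma wv_zpow (m : ℤ) : wv v (t ^ m) = (m : WithTop ℤ) := by
  rw [wv_of_ne (zpow_ne_zero _ ht0), v_zpow hv_mul ht0 ht1]

end tpow

section MatBounds
variable {n k : ℕ}

/-- all entries have nonnegative valuation -/
def EntB (v : L → ℤ) {m p : Type*} (U : Matrix m p L) : Prop := ∀ i j, 0 ≤ wv v (U i j)

variable (hv_mul : ∀ x y : L, x ≠ 0 → y ≠ 0 → v (x * y) = v x + v y)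
variable (hv_add : ∀ x y : L, x ≠ 0 → y ≠ 0 → x + y ≠ 0 → min (v x) (v y) ≤ v (x + y))

include hv_mul in
lemma wv_pm_one (s : ℤˣ) : wv v (((s:ℤ):L)) = 0 := by
  rcases Int.units_eq_one_or s with h | h <;> rw [h]
  · simpa using wv_one hv_mul
  · push_cast
    rw [wv_neg hv_mul]
    simpa using wv_one hv_mul

include hv_mul hv_add in
lemma entB_mul {U V : Matrix (Fin n) (Fin n) L} (hU : EntB v U) (hV : EntB v V) :
    EntB v (U * V) := by
  intro i j
  rw [Matrix.mul_apply]
  refine wv_sum hv_add _ _ _ fun m _ => ?_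
  rw [wv_mul hv_mul]
  exact add_nonneg (hU i m) (hV m j)

include hv_mul hv_add in
lemma wv_det_nonneg {U : Matrix (Fin n) (Fin n) L} (hU : EntB v U) : 0 ≤ wv v U.det := by
  rw [Matrix.det_apply']
  refine wv_sum hv_add _ _ _ fun s _ => ?_
  rw [wv_mul hv_mul, wv_prod hv_mul, wv_pm_one hv_mul]
  simpa using Finset.sum_nonneg fun i _ => hU (s i) i

lemma det_rect_mul (A : Matrix (Fin k) (Fin n) L) (B : Matrix (Fin n) (Fin k) L) :
    (A * B).det = ∑ f : Fin k → Fin n, (∏ i, A i (f i)) * (B.submatrix f id).det := by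
  have h1 : (A * B) = Matrix.of (fun i => ∑ m : Fin n, A i m • B m) := by
    ext i j; simp [Matrix.mul_apply]
  have h2 := MultilinearMap.map_sum
    ((Matrix.detRowAlternating (R := L) (n := Fin k)).toMultilinearMap)
    (g := fun i m => A i m • B m)
  have h3 : ∀ f : Fin k → Fin n,
      (Matrix.detRowAlternating (R := L) (n := Fin k)).toMultilinearMap
        (fun i => A i (f i) • B (f i)) = (∏ i, A i (f i)) * (B.submatrix f id).det := by
    intro f
    rw [MultilinearMap.map_smul_univ, smul_eq_mul]
    rfl
  rw [h1]
  calc (Matrix.of (fun i => ∑ m : Fin n, A i m • B m) : Matrix (Fin k) (Fin k) L).det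
      = (Matrix.detRowAlternating (R := L) (n := Fin k)).toMultilinearMap
          (fun i => ∑ m : Fin n, A i m • B m) := rfl
    _ = ∑ f : Fin k → Fin n, (Matrix.detRowAlternating (R := L) (n := Fin k)).toMultilinearMap
          (fun i => A i (f i) • B (f i)) := h2
    _ = _ := Finset.sum_congr rfl fun f _ => h3 f

lemma minor_mul_left (U g : Matrix (Fin n) (Fin n) L) (r c : Fin k → Fin n) :
    ((U * g).submatrix r c).det
      = ∑ f : Fin k → Fin n, (∏ i, U (r i) (f i)) * (g.submatrix f c).det := by
  have h : (U * g).submatrix r c = (U.submatrix r id) * (g.submatrix id c) := by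
    ext i j; simp [Matrix.mul_apply]
  rw [h, det_rect_mul]
  refine Finset.sum_congr rfl fun f _ => ?_
  rw [Matrix.submatrix_submatrix]
  simp [Function.comp_def]

/-- all k×k minors have valuation at least β -/
def MinB (v : L → ℤ) (g : Matrix (Fin n) (Fin n) L) (k : ℕ) (β : WithTop ℤ) : Prop :=
  ∀ r c : Fin k → Fin n, Function.Injective r → Function.Injective c →
    β ≤ wv v ((g.submatrix r c).det)

include hv_mul hv_add in
lemma minB_mul_left {U g : Matrix (Fin n) (Fin n) L} {β : WithTop ℤ}
    (hU : EntB v U) (hg : MinB v g k β) : MinB v (U * g) k β := by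
  intro r c hr hc
  rw [minor_mul_left]
  refine wv_sum hv_add _ _ _ fun f _ => ?_
  by_cases hf : Function.Injective f
  · rw [wv_mul hv_mul]
    calc β = 0 + β := (zero_add β).symm
    _ ≤ _ := by
      refine add_le_add ?_ (hg f c hf hc)
      rw [wv_prod hv_mul]
      exact Finset.sum_nonneg fun i _ => hU (r i) (f i)
  · obtain ⟨i, j, hij, hne⟩ : ∃ i j, f i = f j ∧ i ≠ j := by
      simp only [Function.Injective, not_forall] at hf
      obtain ⟨i, j, h1, h2⟩ := hf
      exact ⟨i, j, h1, h2⟩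
    have h0 : (g.submatrix f c).det = 0 := by
      refine Matrix.det_zero_of_row_eq hne ?_
      ext x
      simp [hij]
    simp [h0, wv_zero]

lemma minB_transpose {g : Matrix (Fin n) (Fin n) L} {β : WithTop ℤ}
    (hg : MinB v g k β) : MinB v gᵀ k β := by
  intro r c hr hc
  have h : (gᵀ.submatrix r c) = (g.submatrix c r)ᵀ := by ext i j; simp
  rw [h, Matrix.det_transpose]
  exact hg c r hc hr

include hv_mul hv_add in
lemma minB_mul_right {g V : Matrix (Fin n) (Fin n) L} {β : WithTop ℤ}
    (hV : EntB v V) (hg : MinB v g k β) : MinB v (g * V) k β := by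
  intro r c hr hc
  have h : ((g * V).submatrix r c) = ((Vᵀ * gᵀ).submatrix c r)ᵀ := by
    ext i j; simp [Matrix.mul_apply, mul_comm]
  rw [h, Matrix.det_transpose]
  exact minB_mul_left hv_mul hv_add (fun i j => hV j i) (minB_transpose hg) c r hc hr

include hv_mul hv_add in
lemma minB_mul {U g V : Matrix (Fin n) (Fin n) L} {β : WithTop ℤ}
    (hU : EntB v U) (hV : EntB v V) (hg : MinB v g k β) : MinB v (U * g * V) k β :=
  minB_mul_right hv_mul hv_add hV (minB_mul_left hv_mul hv_add hU hg)

end MatBounds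

section Diag
variable {n k : ℕ}

lemma fin_strictMono_le {k n : ℕ} {f : Fin k → Fin n} (hf : StrictMono f) :
    ∀ (m : ℕ) (hm : m < k), m ≤ ((f ⟨m, hm⟩ : Fin n) : ℕ) := by
  intro m
  induction m with
  | zero => intro _; exact Nat.zero_le _
  | succ m ih =>
    intro hm
    have hm2 : m < k := by omega
    have h2 : f ⟨m, hm2⟩ < f ⟨m + 1, hm⟩ := hf (by simp [Fin.lt_def])
    have h3 := ih hm2
    rw [Fin.lt_def] at h2
    omega

lemma coe_sum_withTop {ι : Type*} (s : Finset ι) (f : ι → ℤ) :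
    ((∑ i ∈ s, f i : ℤ) : WithTop ℤ) = ∑ i ∈ s, (f i : WithTop ℤ) := by
  induction s using Finset.cons_induction with
  | empty => rfl
  | cons i s hi ih => rw [Finset.sum_cons, Finset.sum_cons, WithTop.coe_add, ih]

lemma sum_mono_le_sum_inj {a : Fin n → ℤ} (ha : Monotone a) {k : ℕ} (hk : k ≤ n)
    {r : Fin k → Fin n} (hr : Function.Injective r) :
    ∑ i : Fin k, a (Fin.castLE hk i) ≤ ∑ i : Fin k, a (r i) := by
  set s : Finset (Fin n) := Finset.image r Finset.univ with hs
  have hcard : s.card = k := by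
    rw [hs, Finset.card_image_of_injective _ hr, Finset.card_univ, Fintype.card_fin]
  have h1 : ∑ i : Fin k, a (r i) = ∑ x ∈ s, a x := by
    rw [hs, Finset.sum_image]
    intro x _ y _ h
    exact hr h
  have himg : Finset.image (s.orderEmbOfFin hcard) Finset.univ = s := by
    apply Finset.coe_injective
    rw [Finset.coe_image, Finset.coe_univ, Set.image_univ, Finset.range_orderEmbOfFin]
  have h2 : ∑ x ∈ Finset.image (s.orderEmbOfFin hcard) Finset.univ, a x
      = ∑ i : Fin k, a (s.orderEmbOfFin hcard i) := by
    rw [Finset.sum_image]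
    intro x _ y _ h
    exact (s.orderEmbOfFin hcard).injective h
  rw [himg] at h2
  rw [h1, h2]
  refine Finset.sum_le_sum fun i _ => ha ?_
  rw [Fin.le_def]
  simpa using fin_strictMono_le (s.orderEmbOfFin hcard).strictMono i i.2

variable (hv_mul : ∀ x y : L, x ≠ 0 → y ≠ 0 → v (x * y) = v x + v y)
variable (hv_add : ∀ x y : L, x ≠ 0 → y ≠ 0 → x + y ≠ 0 → min (v x) (v y) ≤ v (x + y))
variable (ht0 : t ≠ 0) (ht1 : v t = 1)

include hv_mul hv_add ht0 ht1 in
lemma minB_diagonal {b : Fin n → ℤ} (hb : Monotone b) (hk : k ≤ n) :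
    MinB v (diagonal fun i => t ^ (b i)) k ((∑ i : Fin k, b (Fin.castLE hk i) : ℤ) : WithTop ℤ) := by
  intro r c hr hc
  rw [Matrix.det_apply']
  refine wv_sum hv_add _ _ _ fun σ _ => ?_
  by_cases hall : ∀ i, r (σ i) = c i
  · rw [wv_mul hv_mul, wv_pm_one hv_mul, zero_add, wv_prod hv_mul]
    have hterm : ∀ i : Fin k,
        wv v (((diagonal fun i => t ^ (b i)).submatrix r c) (σ i) i)
          = ((b (r (σ i)) : ℤ) : WithTop ℤ) := by
      intro i
      rw [Matrix.submatrix_apply, hall i, Matrix.diagonal_apply_eq,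
        ← hall i, wv_zpow hv_mul ht0 ht1]
    calc ((∑ i : Fin k, b (Fin.castLE hk i) : ℤ) : WithTop ℤ)
        ≤ ((∑ i : Fin k, b (r (σ i)) : ℤ) : WithTop ℤ) := by
          exact_mod_cast sum_mono_le_sum_inj hb hk (hr.comp σ.injective)
      _ = _ := by rw [coe_sum_withTop]; exact Finset.sum_congr rfl fun i _ => (hterm i).symm
  · push_neg at hall
    obtain ⟨i, hi⟩ := hall
    have h0 : ((diagonal fun i => t ^ (b i)).submatrix r c) (σ i) i = 0 := by
      rw [Matrix.submatrix_apply, Matrix.diagonal_apply_ne _ hi]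
    have hp : (∏ j : Fin k, ((diagonal fun i => t ^ (b i)).submatrix r c) (σ j) j) = 0 :=
      Finset.prod_eq_zero (Finset.mem_univ i) h0
    rw [hp, mul_zero, wv_zero]
    exact le_top

lemma diag_submatrix_castLE {b : Fin n → ℤ} (hk : k ≤ n) :
    ((diagonal fun i => t ^ (b i)).submatrix (Fin.castLE hk) (Fin.castLE hk))
      = diagonal (fun i : Fin k => t ^ (b (Fin.castLE hk i))) := by
  ext i j
  rcases eq_or_ne i j with h | h
  · subst h
    simp
  · rw [Matrix.submatrix_apply, Matrix.diagonal_apply_ne _ h,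
      Matrix.diagonal_apply_ne _ (fun hc => h (Fin.castLE_injective hk hc))]

include hv_mul ht0 ht1 in
lemma wv_det_diag_castLE {b : Fin n → ℤ} (hk : k ≤ n) :
    wv v (((diagonal fun i => t ^ (b i)).submatrix (Fin.castLE hk) (Fin.castLE hk)).det)
      = ((∑ i : Fin k, b (Fin.castLE hk i) : ℤ) : WithTop ℤ) := by
  rw [diag_submatrix_castLE, Matrix.det_diagonal, wv_prod hv_mul, coe_sum_withTop]
  exact Finset.sum_congr rfl fun i _ => wv_zpow hv_mul ht0 ht1 _

end Diag

section ExistsMinor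
variable {n : ℕ}

lemma exists_minor_step {m : ℕ} {g : Matrix (Fin n) (Fin n) L}
    (r c : Fin (m + 1) → Fin n) (hr : Function.Injective r) (hc : Function.Injective c)
    (hd : (g.submatrix r c).det ≠ 0) :
    ∃ r' c' : Fin m → Fin n, Function.Injective r' ∧ Function.Injective c' ∧
      (g.submatrix r' c').det ≠ 0 := by
  rw [Matrix.det_succ_column_zero] at hd
  obtain ⟨i, -, hi⟩ := Finset.exists_ne_zero_of_sum_ne_zero hd
  refine ⟨r ∘ i.succAbove, c ∘ Fin.succ, hr.comp (Fin.succAbove_right_injective),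
    hc.comp (Fin.succ_injective _), ?_⟩
  have h2 : ((g.submatrix r c).submatrix i.succAbove Fin.succ).det ≠ 0 := by
    intro h0
    rw [h0, mul_zero] at hi
    exact hi rfl
  rwa [Matrix.submatrix_submatrix] at h2

lemma exists_minor_le {g : Matrix (Fin n) (Fin n) L} :
    ∀ (m : ℕ) (r c : Fin m → Fin n), Function.Injective r → Function.Injective c →
      (g.submatrix r c).det ≠ 0 → ∀ k ≤ m,
        ∃ r' c' : Fin k → Fin n, Function.Injective r' ∧ Function.Injective c' ∧
          (g.submatrix r' c').det ≠ 0 := by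
  intro m
  induction m with
  | zero =>
    intro r c hr hc hd k hk
    obtain rfl : k = 0 := Nat.le_zero.mp hk
    exact ⟨r, c, hr, hc, hd⟩
  | succ m ih =>
    intro r c hr hc hd k hk
    rcases Nat.eq_or_lt_of_le hk with rfl | h
    · exact ⟨r, c, hr, hc, hd⟩
    · obtain ⟨r', c', h1, h2, h3⟩ := exists_minor_step r c hr hc hd
      exact ih r' c' h1 h2 h3 k (by omega)

lemma exists_nonzero_minor {g : Matrix (Fin n) (Fin n) L} (hg : g.det ≠ 0)
    (k : ℕ) (hk : k ≤ n) :
    ∃ r c : Fin k → Fin n, Function.Injective r ∧ Function.Injective c ∧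
      (g.submatrix r c).det ≠ 0 := by
  have hid : g.submatrix (Fin.castLE (le_refl n)) (Fin.castLE (le_refl n)) = g := rfl
  exact exists_minor_le n (Fin.castLE (le_refl n)) (Fin.castLE (le_refl n))
    (Fin.castLE_injective _) (Fin.castLE_injective _) (hid ▸ hg) k hk

end ExistsMinor

section Raw
variable {n : ℕ}
variable (hv_mul : ∀ x y : L, x ≠ 0 → y ≠ 0 → v (x * y) = v x + v y)
variable (hv_add : ∀ x y : L, x ≠ 0 → y ≠ 0 → x + y ≠ 0 → min (v x) (v y) ≤ v (x + y))
variable (ht0 : t ≠ 0) (ht1 : v t = 1)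

include hv_mul hv_add ht0 ht1 in
lemma rawForward {g U V WU WV : Matrix (Fin n) (Fin n) L} {b : Fin n → ℤ}
    (hb : Monotone b)
    (hU : EntB v U) (hV : EntB v V) (hWU : EntB v WU) (hWV : EntB v WV)
    (hUW : U * WU = 1) (hVW : V * WV = 1)
    (hdec : g = U * diagonal (fun i => t ^ (b i)) * V)
    (hgdet : g.det ≠ 0)
    {k : ℕ} (hk : k ≤ n) :
    IsLeast {w : ℤ | ∃ r c : Fin k → Fin n, Function.Injective r ∧ Function.Injective c ∧
        (g.submatrix r c).det ≠ 0 ∧ v ((g.submatrix r c).det) = w}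
      (∑ i : Fin k, b (Fin.castLE hk i)) := by
  set D := diagonal (fun i : Fin n => t ^ (b i)) with hD
  set σk := ∑ i : Fin k, b (Fin.castLE hk i) with hσ
  set S := {w : ℤ | ∃ r c : Fin k → Fin n, Function.Injective r ∧ Function.Injective c ∧
        (g.submatrix r c).det ≠ 0 ∧ v ((g.submatrix r c).det) = w} with hS
  have hlow : MinB v g k (σk : WithTop ℤ) := by
    rw [hdec]
    exact minB_mul hv_mul hv_add hU hV (minB_diagonal hv_mul hv_add ht0 ht1 hb hk)
  obtain ⟨r0, c0, hr0, hc0, hd0⟩ := exists_nonzero_minor hgdet k hk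
  have hSne : ∃ z : ℤ, z ∈ S := ⟨v ((g.submatrix r0 c0).det), r0, c0, hr0, hc0, hd0, rfl⟩
  have hbdd : ∀ z ∈ S, σk ≤ z := by
    rintro z ⟨r, c, hrr, hcc, hd, hz⟩
    have h := hlow r c hrr hcc
    rw [wv_of_ne hd, hz] at h
    exact_mod_cast h
  obtain ⟨l, hlmem, hlle⟩ := Int.exists_least_of_bdd ⟨σk, hbdd⟩ hSne
  have h1 : σk ≤ l := hbdd l hlmem
  have hgl : MinB v g k (l : WithTop ℤ) := by
    intro r c hrr hcc
    by_cases hd : (g.submatrix r c).det = 0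
    · rw [hd, wv_zero]; exact le_top
    · rw [wv_of_ne hd]
      exact_mod_cast hlle _ ⟨r, c, hrr, hcc, hd, rfl⟩
  have hDl : MinB v D k (l : WithTop ℤ) := by
    have hD2 : D = WU * g * WV := by
      rw [hdec]
      have hc1 : WU * U = 1 := mul_eq_one_comm.mp hUW
      calc D = (WU * U) * D * (V * WV) := by rw [hc1, hVW, Matrix.one_mul, Matrix.mul_one]
        _ = WU * (U * D * V) * WV := by simp only [Matrix.mul_assoc]
    rw [hD2]
    exact minB_mul hv_mul hv_add hWU hWV hgl
  have h2 : (l : WithTop ℤ) ≤ ((σk : ℤ) : WithTop ℤ) := by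
    have h := hDl (Fin.castLE hk) (Fin.castLE hk) (Fin.castLE_injective hk) (Fin.castLE_injective hk)
    rwa [wv_det_diag_castLE hv_mul ht0 ht1 hk] at h
  have h3 : l = σk := le_antisymm (by exact_mod_cast h2) h1
  exact ⟨h3 ▸ hlmem, fun z hz => h3 ▸ hbdd z hz⟩

end Raw

section Elem
variable {n : ℕ}

lemma pm_one_ne_zero (s : ℤˣ) : (((s : ℤ) : L)) ≠ 0 := by
  rcases Int.units_eq_one_or s with h | h <;> rw [h] <;> push_cast <;> simp

def Ecol (n : ℕ) (c : Fin (n + 1) → L) : Matrix (Fin (n + 1)) (Fin (n + 1)) L :=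
  Matrix.of fun i j => if j = 0 ∧ i ≠ 0 then c i else 0

lemma Ecol_mul (c : Fin (n + 1) → L) (g : Matrix (Fin (n + 1)) (Fin (n + 1)) L) :
    Ecol n c * g = Matrix.of fun i j => if i = 0 then 0 else c i * g 0 j := by
  ext i j
  rw [Matrix.mul_apply]
  rw [Finset.sum_eq_single 0]
  · by_cases hi : i = 0 <;> simp [Ecol, hi]
  · intro k _ hk
    simp [Ecol, hk]
  · intro h
    exact absurd (Finset.mem_univ 0) h

lemma Ecol_mul_Ecol (c d : Fin (n + 1) → L) : Ecol n c * Ecol n d = 0 := by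
  rw [Ecol_mul]
  ext i j
  by_cases hi : i = 0 <;> simp [Ecol, hi]

lemma Ecol_inv (c : Fin (n + 1) → L) :
    (1 + Ecol n c) * (1 + Ecol n (-c)) = 1 := by
  have hneg : Ecol n (-c) = - Ecol n c := by
    ext i j
    by_cases h : j = 0 ∧ i ≠ 0 <;> simp [Ecol, h]
  rw [hneg]
  have h2 : (1 + Ecol n c) * (1 - Ecol n c) = 1 - Ecol n c * Ecol n c := by noncomm_ring
  rw [sub_eq_add_neg] at h2
  rw [h2, Ecol_mul_Ecol, sub_zero]

lemma mul_Erow (d : Fin (n + 1) → L) (g : Matrix (Fin (n + 1)) (Fin (n + 1)) L) :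
    g * (Ecol n d)ᵀ = Matrix.of fun i j => if j = 0 then 0 else d j * g i 0 := by
  ext i j
  have h1 : (g * (Ecol n d)ᵀ) i j = (Ecol n d * gᵀ) j i := by
    rw [Matrix.mul_apply, Matrix.mul_apply]
    exact Finset.sum_congr rfl fun k _ => by rw [Matrix.transpose_apply, Matrix.transpose_apply, mul_comm]
  rw [h1, Ecol_mul]
  rfl

variable (hv_mul : ∀ x y : L, x ≠ 0 → y ≠ 0 → v (x * y) = v x + v y)
variable (hv_add : ∀ x y : L, x ≠ 0 → y ≠ 0 → x + y ≠ 0 → min (v x) (v y) ≤ v (x + y))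

include hv_add in
lemma entB_add {m p : Type*} {X Y : Matrix m p L} (hX : EntB v X) (hY : EntB v Y) :
    EntB v (X + Y) := by
  intro i j
  rw [Matrix.add_apply]
  refine le_trans ?_ (wv_add_ge hv_add _ _)
  rw [le_min_iff]
  exact ⟨hX i j, hY i j⟩

include hv_mul in
lemma entB_one : EntB v (1 : Matrix (Fin n) (Fin n) L) := by
  intro i j
  by_cases h : i = j
  · subst h
    rw [Matrix.one_apply_eq, wv_one hv_mul]
  · rw [Matrix.one_apply_ne h, wv_zero]
    exact le_top

lemma entB_Ecol {c : Fin (n + 1) → L} (hc : ∀ i, 0 ≤ wv v (c i)) : EntB v (Ecol n c) := by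
  intro i j
  unfold Ecol
  rw [Matrix.of_apply]
  split
  · exact hc i
  · rw [wv_zero]
    exact le_top

lemma entB_transpose {m p : Type*} {X : Matrix m p L} (hX : EntB v X) : EntB v Xᵀ :=
  fun i j => hX j i

include hv_mul hv_add in
lemma wv_det_unit {X Y : Matrix (Fin n) (Fin n) L} (hX : EntB v X) (hY : EntB v Y)
    (hXY : X * Y = 1) : wv v X.det = 0 := by
  have h1 : X.det * Y.det = 1 := by rw [← Matrix.det_mul, hXY, Matrix.det_one]
  have h2 : wv v X.det + wv v Y.det = 0 := by
    rw [← wv_mul hv_mul, h1, wv_one hv_mul]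
  have h3 := wv_det_nonneg hv_mul hv_add hX
  have h4 := wv_det_nonneg hv_mul hv_add hY
  refine le_antisymm ?_ h3
  calc wv v X.det = wv v X.det + 0 := (add_zero _).symm
    _ ≤ wv v X.det + wv v Y.det := add_le_add_right h4 _
    _ = 0 := h2

include hv_mul in
lemma det_ne_zero_of_inv {X Y : Matrix (Fin n) (Fin n) L} (hXY : X * Y = 1) : X.det ≠ 0 := by
  have h1 : X.det * Y.det = 1 := by rw [← Matrix.det_mul, hXY, Matrix.det_one]
  exact left_ne_zero_of_mul_eq_one h1

end Elem

section Brd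
variable {n : ℕ}

def brd (p : L) (A : Matrix (Fin n) (Fin n) L) : Matrix (Fin (n + 1)) (Fin (n + 1)) L :=
  Matrix.of fun i j =>
    Fin.cases (Fin.cases p (fun _ => 0) j) (fun i' => Fin.cases 0 (fun j' => A i' j') j) i

@[simp] lemma brd_00 (p : L) (A : Matrix (Fin n) (Fin n) L) : brd p A 0 0 = p := rfl
@[simp] lemma brd_0s (p : L) (A : Matrix (Fin n) (Fin n) L) (j : Fin n) :
    brd p A 0 j.succ = 0 := by simp [brd]
@[simp] lemma brd_s0 (p : L) (A : Matrix (Fin n) (Fin n) L) (i : Fin n) :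
    brd p A i.succ 0 = 0 := by simp [brd]
@[simp] lemma brd_ss (p : L) (A : Matrix (Fin n) (Fin n) L) (i j : Fin n) :
    brd p A i.succ j.succ = A i j := by simp [brd]

lemma brd_mul (p q : L) (A B : Matrix (Fin n) (Fin n) L) :
    brd p A * brd q B = brd (p * q) (A * B) := by
  ext i j
  rw [Matrix.mul_apply, Fin.sum_univ_succ]
  refine Fin.cases ?_ (fun i' => ?_) i <;> refine Fin.cases ?_ (fun j' => ?_) j <;>
    simp [Matrix.mul_apply]

lemma brd_det (p : L) (A : Matrix (Fin n) (Fin n) L) : (brd p A).det = p * A.det := by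
  rw [Matrix.det_succ_column_zero, Fin.sum_univ_succ]
  have h1 : (brd p A).submatrix Fin.succ Fin.succ = A := by
    ext i j
    simp
  simp [Fin.succAbove_zero, h1]

lemma brd_diag (p : L) (d : Fin n → L) : brd p (diagonal d) = diagonal (Fin.cons p d) := by
  ext i j
  refine Fin.cases ?_ (fun i' => ?_) i <;> refine Fin.cases ?_ (fun j' => ?_) j
  · simp
  · simp [Matrix.diagonal_apply_ne _ (Fin.succ_ne_zero j').symm]
  · simp [Matrix.diagonal_apply_ne _ (Fin.succ_ne_zero i')]
  · rcases eq_or_ne i' j' with h | h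
    · subst h
      simp
    · rw [brd_ss, Matrix.diagonal_apply_ne _ h,
        Matrix.diagonal_apply_ne _ (fun hc => h (Fin.succ_injective _ hc))]

lemma entB_brd {p : L} {A : Matrix (Fin n) (Fin n) L} (hp : 0 ≤ wv v p) (hA : EntB v A) :
    EntB v (brd p A) := by
  intro i j
  refine Fin.cases ?_ (fun i' => ?_) i <;> refine Fin.cases ?_ (fun j' => ?_) j
  · simpa using hp
  · rw [brd_0s, wv_zero]; exact le_top
  · rw [brd_s0, wv_zero]; exact le_top
  · rw [brd_ss]; exact hA i' j'

lemma monotone_cons {b0 : ℤ} {b' : Fin n → ℤ} (h0 : ∀ i, b0 ≤ b' i) (hb : Monotone b') :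
    Monotone (Fin.cons b0 b' : Fin (n + 1) → ℤ) := by
  intro i j hij
  rcases Fin.eq_zero_or_eq_succ i with rfl | ⟨i', rfl⟩ <;>
    rcases Fin.eq_zero_or_eq_succ j with rfl | ⟨j', rfl⟩
  · exact le_rfl
  · simpa using h0 j'
  · exact absurd hij (by simp [Fin.le_def])
  · simpa using hb (Fin.succ_le_succ_iff.mp hij)

end Brd

section SNF
variable (hv_mul : ∀ x y : L, x ≠ 0 → y ≠ 0 → v (x * y) = v x + v y)
variable (hv_add : ∀ x y : L, x ≠ 0 → y ≠ 0 → x + y ≠ 0 → min (v x) (v y) ≤ v (x + y))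
variable (ht0 : t ≠ 0) (ht1 : v t = 1)

include hv_mul hv_add ht0 ht1 in
theorem snf : ∀ (n : ℕ) (g : Matrix (Fin n) (Fin n) L), EntB v g → g.det ≠ 0 →
    ∃ (U V : Matrix (Fin n) (Fin n) L) (b : Fin n → ℤ),
      EntB v U ∧ EntB v V ∧ wv v U.det = 0 ∧ wv v V.det = 0 ∧ Monotone b ∧
      g = U * diagonal (fun i => t ^ (b i)) * V ∧
      (∀ β : WithTop ℤ, (∀ i j, β ≤ wv v (g i j)) → ∀ i, β ≤ (b i : WithTop ℤ)) := by
  intro n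
  induction n with
  | zero =>
    intro g hg hd
    refine ⟨1, 1, fun i => i.elim0, entB_one hv_mul, entB_one hv_mul, ?_, ?_, ?_, ?_, ?_⟩
    · rw [Matrix.det_one, wv_one hv_mul]
    · rw [Matrix.det_one, wv_one hv_mul]
    · intro i
      exact i.elim0
    · apply Subsingleton.elim
    · intro β _ i
      exact i.elim0
  | succ n ih =>
    intro g hg hd
    -- pick an entry of minimal valuation
    obtain ⟨q0, -, hmin0⟩ := Finset.exists_min_image
      (Finset.univ : Finset (Fin (n + 1) × Fin (n + 1)))
      (fun q => wv v (g q.1 q.2)) ⟨(0, 0), Finset.mem_univ _⟩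
    obtain ⟨i0, j0⟩ := q0
    have hmin : ∀ i j, wv v (g i0 j0) ≤ wv v (g i j) := fun i j =>
      hmin0 (i, j) (Finset.mem_univ _)
    have hp0 : g i0 j0 ≠ 0 := by
      intro h0
      have hz : g = 0 := by
        ext i j
        have h := hmin i j
        rw [h0, wv_zero, top_le_iff, wv_eq_top_iff] at h
        exact h
      rw [hz, Matrix.det_zero] at hd
      exact hd rfl
    set σ : Equiv.Perm (Fin (n + 1)) := Equiv.swap 0 i0 with hσ
    set τ : Equiv.Perm (Fin (n + 1)) := Equiv.swap 0 j0 with hτ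
    set g1 := g.submatrix σ τ with hg1
    have h00 : g1 0 0 = g i0 j0 := by
      rw [hg1, Matrix.submatrix_apply]
      rw [hσ, hτ]
      rw [Equiv.swap_apply_left, Equiv.swap_apply_left]
    set p := g i0 j0 with hpdef
    have hpne : p ≠ 0 := hp0
    have hpmin : ∀ i j, wv v p ≤ wv v (g1 i j) := fun i j => hmin (σ i) (τ j)
    set vp := v p with hvp
    have hwp : wv v p = (vp : WithTop ℤ) := wv_of_ne hpne
    have hvp0 : (0 : WithTop ℤ) ≤ (vp : WithTop ℤ) := by
      rw [← hwp]
      exact hg i0 j0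
    have hEg1 : EntB v g1 := fun i j => hg (σ i) (τ j)
    -- clearing matrices
    set c : Fin (n + 1) → L := fun i => -(g1 i 0) / p with hc
    set d : Fin (n + 1) → L := fun j => -(g1 0 j) / p with hdd
    have hwdiv : ∀ x : L, wv v (-x / p) = wv v x + ((-vp : ℤ) : WithTop ℤ) := by
      intro x
      rw [div_eq_mul_inv, wv_mul hv_mul, wv_neg hv_mul,
        wv_of_ne (inv_ne_zero hpne), v_inv hv_mul hpne]
    have hwc : ∀ i, wv v (c i) = wv v (g1 i 0) + ((-vp : ℤ) : WithTop ℤ) := fun i =>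
      hwdiv (g1 i 0)
    have hwd : ∀ j, wv v (d j) = wv v (g1 0 j) + ((-vp : ℤ) : WithTop ℤ) := fun j =>
      hwdiv (g1 0 j)
    have hc_ent : ∀ i, 0 ≤ wv v (c i) := by
      intro i
      rw [hwc]
      calc (0 : WithTop ℤ) = (vp : ℤ) + ((-vp : ℤ) : WithTop ℤ) := by
            rw [← WithTop.coe_add]
            simp
        _ ≤ _ := by
            refine add_le_add_left ?_ _
            rw [← hwp]
            exact hpmin i 0
    have hd_ent : ∀ j, 0 ≤ wv v (d j) := by
      intro j
      rw [hwd]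
      calc (0 : WithTop ℤ) = (vp : ℤ) + ((-vp : ℤ) : WithTop ℤ) := by
            rw [← WithTop.coe_add]
            simp
        _ ≤ _ := by
            refine add_le_add_left ?_ _
            rw [← hwp]
            exact hpmin 0 j
    set M := (1 + Ecol n c) * g1 * (1 + (Ecol n d)ᵀ) with hM
    have hA : ∀ i j, ((1 + Ecol n c) * g1) i j
        = g1 i j + if i = 0 then 0 else c i * g1 0 j := by
      intro i j
      rw [Matrix.add_mul, Matrix.one_mul, Matrix.add_apply, Ecol_mul]
      rfl
    have hMe : ∀ i j, M i j = ((1 + Ecol n c) * g1) i j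
        + if j = 0 then 0 else d j * ((1 + Ecol n c) * g1) i 0 := by
      intro i j
      rw [hM, Matrix.mul_add, Matrix.mul_one, Matrix.add_apply, mul_Erow]
      rfl
    have hA0 : ∀ i, ((1 + Ecol n c) * g1) i 0 = if i = 0 then p else 0 := by
      intro i
      rw [hA]
      by_cases hi : i = 0
      · subst hi
        rw [if_pos rfl, if_pos rfl, add_zero, h00, hpdef]
      · rw [if_neg hi, if_neg hi, hc]
        have : -(g1 i 0) / p * g1 0 0 = -(g1 i 0) := by
          rw [h00, div_mul_cancel₀ _ hpne]
        rw [this, add_neg_cancel]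
    have hM00 : M 0 0 = p := by
      rw [hMe, if_pos rfl, add_zero, hA0, if_pos rfl]
    have hMs0 : ∀ i : Fin n, M i.succ 0 = 0 := by
      intro i
      rw [hMe, if_pos rfl, add_zero, hA0, if_neg (Fin.succ_ne_zero i)]
    have hM0s : ∀ j : Fin n, M 0 j.succ = 0 := by
      intro j
      rw [hMe, if_neg (Fin.succ_ne_zero j), hA0, if_pos rfl, hA, if_pos rfl, add_zero, hdd]
      have : -(g1 0 j.succ) / p * p = -(g1 0 j.succ) := div_mul_cancel₀ _ hpne
      rw [this, add_neg_cancel]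
    have hMss : ∀ i j : Fin n, M i.succ j.succ
        = g1 i.succ j.succ + c i.succ * g1 0 j.succ := by
      intro i j
      rw [hMe, if_neg (Fin.succ_ne_zero j), hA0, if_neg (Fin.succ_ne_zero i), mul_zero,
        add_zero, hA, if_neg (Fin.succ_ne_zero i)]
    -- valuation bound on the entries of the reduced block
    have hMb : ∀ β : WithTop ℤ, (∀ i j, β ≤ wv v (g1 i j)) → ∀ i j : Fin n,
        β ≤ wv v (M i.succ j.succ) := by
      intro β hβ i j
      rw [hMss]
      refine le_trans ?_ (wv_add_ge hv_add _ _)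
      rw [le_min_iff]
      refine ⟨hβ _ _, ?_⟩
      have h1 : β = β + ((-vp : ℤ) : WithTop ℤ) + ((vp : ℤ) : WithTop ℤ) := by
        cases β with
        | top => rw [top_add, top_add]
        | coe b => rw [← WithTop.coe_add, ← WithTop.coe_add]; norm_num
      rw [wv_mul hv_mul, hwc, h1]
      refine add_le_add (add_le_add_left (hβ _ _) _) ?_
      rw [← hwp]
      exact hpmin 0 j.succ
    set M1 := M.submatrix Fin.succ Fin.succ with hM1
    have hMbrd : M = brd p M1 := by
      ext i j
      refine Fin.cases ?_ (fun i' => ?_) i <;> refine Fin.cases ?_ (fun j' => ?_) j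
      · rw [hM00, brd_00]
      · rw [hM0s, brd_0s]
      · rw [hMs0, brd_s0]
      · rw [brd_ss]
        rfl
    -- determinants are nonzero
    have hdetg1 : g1.det ≠ 0 := by
      have h1 : g1 = (g.submatrix id τ).submatrix σ id := by
        rw [Matrix.submatrix_submatrix]
        rfl
      rw [h1, Matrix.det_permute, Matrix.det_permute']
      exact mul_ne_zero (pm_one_ne_zero _) (mul_ne_zero (pm_one_ne_zero _) hd)
    have hdetM : M.det ≠ 0 := by
      rw [hM, Matrix.det_mul, Matrix.det_mul]
      refine mul_ne_zero (mul_ne_zero ?_ hdetg1) ?_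
      · exact det_ne_zero_of_inv hv_mul (Ecol_inv c)
      · have h2 : (1 + (Ecol n d)ᵀ) * (1 + (Ecol n (-d))ᵀ) = 1 := by
          have h3 := Ecol_inv (-d)
          rw [show Ecol n (-(-d)) = Ecol n d by rw [neg_neg]] at h3
          calc (1 + (Ecol n d)ᵀ) * (1 + (Ecol n (-d))ᵀ)
              = ((1 + Ecol n (-d)) * (1 + Ecol n d))ᵀ := by
                rw [Matrix.transpose_mul, Matrix.transpose_add, Matrix.transpose_add,
                  Matrix.transpose_one]
          _ = 1 := by rw [h3, Matrix.transpose_one]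
        exact det_ne_zero_of_inv hv_mul h2
    have hdetM1 : M1.det ≠ 0 := by
      intro h0
      rw [hMbrd, brd_det, h0, mul_zero] at hdetM
      exact hdetM rfl
    have hEM : EntB v M := by
      rw [hM]
      refine entB_mul hv_mul hv_add (entB_mul hv_mul hv_add ?_ hEg1) ?_
      · exact entB_add hv_add (entB_one hv_mul) (entB_Ecol hc_ent)
      · exact entB_add hv_add (entB_one hv_mul) (entB_transpose (entB_Ecol hd_ent))
    have hEM1 : EntB v M1 := fun i j => hEM i.succ j.succ
    obtain ⟨U2, V2, b', hU2, hV2, hdU2, hdV2, hb', hdec2, hbd2⟩ := ih M1 hEM1 hdetM1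
    have hb'vp : ∀ i, vp ≤ b' i := by
      intro i
      have := hbd2 (vp : WithTop ℤ) (fun i j => hMb _ (fun i j => hwp ▸ hpmin i j) i j) i
      exact_mod_cast this
    set b : Fin (n + 1) → ℤ := Fin.cons vp b' with hb
    have hbmono : Monotone b := monotone_cons hb'vp hb'
    -- assemble
    set u := p / t ^ vp with hu
    have hut : u * t ^ vp = p := div_mul_cancel₀ _ (zpow_ne_zero _ ht0)
    have hune : u ≠ 0 := by
      intro h0
      rw [h0, zero_mul] at hut
      exact hpne hut.symm
    have hwu : wv v u = 0 := by
      rw [hu, div_eq_mul_inv, wv_mul hv_mul, hwp, wv_of_ne (inv_ne_zero (zpow_ne_zero _ ht0)),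
        v_inv hv_mul (zpow_ne_zero _ ht0), v_zpow hv_mul ht0 ht1, ← WithTop.coe_add]
      simp
    have hdiagcons : brd (t ^ vp) (diagonal fun i => t ^ (b' i))
        = diagonal (fun i => t ^ (b i)) := by
      have hfun : (Fin.cons (t ^ vp) (fun i => t ^ (b' i)) : Fin (n + 1) → L)
          = fun i => t ^ (b i) := by
        funext i
        refine Fin.cases ?_ (fun i' => ?_) i <;> simp [hb]
      rw [brd_diag, hfun]
    have hbrddec : M = brd u U2 * diagonal (fun i => t ^ (b i)) * brd 1 V2 := by
      rw [hMbrd, hdec2, ← hdiagcons, brd_mul, brd_mul, hut, mul_one]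
    have hg1dec : g1 = ((1 + Ecol n (-c)) * brd u U2) * diagonal (fun i => t ^ (b i))
        * (brd 1 V2 * (1 + (Ecol n (-d))ᵀ)) := by
      have hLL : (1 + Ecol n (-c)) * (1 + Ecol n c) = 1 := by
        have h3 := Ecol_inv (-c)
        rwa [show Ecol n (-(-c)) = Ecol n c by rw [neg_neg]] at h3
      have hRR : (1 + (Ecol n d)ᵀ) * (1 + (Ecol n (-d))ᵀ) = 1 := by
        have h3 := Ecol_inv (-d)
        rw [show Ecol n (-(-d)) = Ecol n d by rw [neg_neg]] at h3
        calc (1 + (Ecol n d)ᵀ) * (1 + (Ecol n (-d))ᵀ)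
            = ((1 + Ecol n (-d)) * (1 + Ecol n d))ᵀ := by
              rw [Matrix.transpose_mul, Matrix.transpose_add, Matrix.transpose_add,
                Matrix.transpose_one]
        _ = 1 := by rw [h3, Matrix.transpose_one]
      calc g1 = ((1 + Ecol n (-c)) * (1 + Ecol n c)) * g1
            * ((1 + (Ecol n d)ᵀ) * (1 + (Ecol n (-d))ᵀ)) := by
            rw [hLL, hRR, Matrix.one_mul, Matrix.mul_one]
        _ = (1 + Ecol n (-c)) * M * (1 + (Ecol n (-d))ᵀ) := by
            rw [hM]
            simp only [Matrix.mul_assoc]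
        _ = _ := by
            rw [hbrddec]
            simp only [Matrix.mul_assoc]
    set U1 := (1 + Ecol n (-c)) * brd u U2 with hU1
    set V1 := brd 1 V2 * (1 + (Ecol n (-d))ᵀ) with hV1
    have hgback : g = g1.submatrix σ.symm τ.symm := by
      ext i j
      rw [hg1, Matrix.submatrix_submatrix]
      simp [Function.comp_def]
    have hnegc_ent : ∀ i, 0 ≤ wv v ((-c) i) := fun i => by
      rw [Pi.neg_apply, wv_neg hv_mul]
      exact hc_ent i
    have hnegd_ent : ∀ j, 0 ≤ wv v ((-d) j) := fun j => by
      rw [Pi.neg_apply, wv_neg hv_mul]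
      exact hd_ent j
    have hEL : EntB v (1 + Ecol n (-c)) :=
      entB_add hv_add (entB_one hv_mul) (entB_Ecol hnegc_ent)
    have hER : EntB v (1 + (Ecol n (-d))ᵀ) :=
      entB_add hv_add (entB_one hv_mul) (entB_transpose (entB_Ecol hnegd_ent))
    have hEU1 : EntB v U1 := by
      rw [hU1]
      refine entB_mul hv_mul hv_add hEL (entB_brd ?_ hU2)
      rw [hwu]
    have hEV1 : EntB v V1 := by
      rw [hV1]
      refine entB_mul hv_mul hv_add (entB_brd ?_ hV2) hER
      rw [wv_one hv_mul]
    have hLL : (1 + Ecol n (-c)) * (1 + Ecol n c) = 1 := by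
      have h3 := Ecol_inv (-c)
      rwa [show Ecol n (-(-c)) = Ecol n c by rw [neg_neg]] at h3
    have hRpair : (1 + (Ecol n (-d))ᵀ) * (1 + (Ecol n d)ᵀ) = 1 := by
      have h3 := Ecol_inv d
      calc (1 + (Ecol n (-d))ᵀ) * (1 + (Ecol n d)ᵀ)
          = ((1 + Ecol n d) * (1 + Ecol n (-d)))ᵀ := by
            rw [Matrix.transpose_mul, Matrix.transpose_add, Matrix.transpose_add,
              Matrix.transpose_one]
      _ = 1 := by rw [h3, Matrix.transpose_one]
    have hEc : EntB v (1 + Ecol n c) :=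
      entB_add hv_add (entB_one hv_mul) (entB_Ecol hc_ent)
    have hEdT : EntB v (1 + (Ecol n d)ᵀ) :=
      entB_add hv_add (entB_one hv_mul) (entB_transpose (entB_Ecol hd_ent))
    have hdL : wv v (1 + Ecol n (-c)).det = 0 :=
      wv_det_unit hv_mul hv_add hEL hEc hLL
    have hdR : wv v (1 + (Ecol n (-d))ᵀ).det = 0 :=
      wv_det_unit hv_mul hv_add hER hEdT hRpair
    have hdU1 : wv v U1.det = 0 := by
      rw [hU1, Matrix.det_mul, wv_mul hv_mul, hdL, brd_det, wv_mul hv_mul, hwu, hdU2]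
      rfl
    have hdV1 : wv v V1.det = 0 := by
      rw [hV1, Matrix.det_mul, wv_mul hv_mul, hdR, brd_det, wv_mul hv_mul, hdV2,
        wv_one hv_mul]
      rfl
    refine ⟨U1.submatrix σ.symm id, V1.submatrix id τ.symm, b, ?_, ?_, ?_, ?_, hbmono, ?_, ?_⟩
    · exact fun i j => hEU1 (σ.symm i) j
    · exact fun i j => hEV1 i (τ.symm j)
    · rw [Matrix.det_permute, wv_mul hv_mul, wv_pm_one hv_mul, hdU1]
      rfl
    · rw [Matrix.det_permute', wv_mul hv_mul, wv_pm_one hv_mul, hdV1]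
      rfl
    · rw [hgback, hg1dec]
      rw [Matrix.submatrix_mul _ _ _ id _ Function.bijective_id]
      rw [Matrix.submatrix_mul _ _ _ id _ Function.bijective_id]
      rw [Matrix.submatrix_id_id]
    · intro β hβ i
      have hβ1 : ∀ i j, β ≤ wv v (g1 i j) := fun i j => hβ (σ i) (τ j)
      refine Fin.cases ?_ (fun i' => ?_) i
      · have h := hβ1 0 0
        rw [h00, hwp] at h
        simpa [hb] using h
      · have h := hbd2 β (fun i j => hMb β hβ1 i j) i'
        simpa [hb] using h

end SNF

section Final
variable {n : ℕ}
variable (hv_mul : ∀ x y : L, x ≠ 0 → y ≠ 0 → v (x * y) = v x + v y)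
variable (hv_add : ∀ x y : L, x ≠ 0 → y ≠ 0 → x + y ≠ 0 → min (v x) (v y) ≤ v (x + y))
variable (ht0 : t ≠ 0) (ht1 : v t = 1)

lemma mem_O_wv {O : Subring L} (hO : ∀ x : L, x ∈ O ↔ x = 0 ∨ 0 ≤ v x) (x : L) :
    x ∈ O ↔ 0 ≤ wv v x := by
  rw [hO]
  rcases eq_or_ne x 0 with rfl | h
  · simp [wv_zero]
  · rw [wv_of_ne h]
    constructor
    · rintro (rfl | h2)
      · exact absurd rfl h
      · exact_mod_cast h2
    · intro h2
      right
      exact_mod_cast h2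

include hv_mul hv_add in
lemma exists_inv_entB {X : Matrix (Fin n) (Fin n) L} (hX : EntB v X)
    (hdX : wv v X.det = 0) :
    ∃ W : Matrix (Fin n) (Fin n) L, EntB v W ∧ X * W = 1 ∧ W * X = 1 := by
  have hdne : X.det ≠ 0 := by
    intro h0
    rw [h0, wv_zero] at hdX
    exact (by simp : (⊤ : WithTop ℤ) ≠ 0) hdX
  have hu : IsUnit X.det := isUnit_iff_ne_zero.mpr hdne
  refine ⟨X⁻¹, ?_, Matrix.mul_nonsing_inv X hu, Matrix.nonsing_inv_mul X hu⟩
  intro i j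
  rw [Matrix.inv_def, Matrix.smul_apply, smul_eq_mul, wv_mul hv_mul]
  have h1 : wv v (Ring.inverse X.det) = 0 := by
    have h2 : v X.det = 0 := by
      rw [wv_of_ne hdne] at hdX
      exact_mod_cast hdX
    rw [Ring.inverse_eq_inv', wv_of_ne (inv_ne_zero hdne), v_inv hv_mul hdne, h2]
    rfl
  rw [h1, zero_add, Matrix.adjugate_apply]
  refine wv_det_nonneg hv_mul hv_add ?_
  intro i' j'
  rw [Matrix.updateRow_apply]
  split
  · rw [Pi.single_apply]
    split
    · rw [wv_one hv_mul]
    · rw [wv_zero]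
      exact le_top
  · exact hX i' j'

lemma telescope {a b : Fin n → ℤ}
    (h : ∀ k : ℕ, 1 ≤ k → ∀ hk : k ≤ n,
      ∑ i : Fin k, a (Fin.castLE hk i) = ∑ i : Fin k, b (Fin.castLE hk i)) :
    ∀ i, a i = b i := by
  intro i
  have key : ∀ (m : ℕ) (hm : m ≤ n),
      ∑ j : Fin m, a (Fin.castLE hm j) = ∑ j : Fin m, b (Fin.castLE hm j) := by
    intro m hm
    rcases Nat.eq_zero_or_pos m with rfl | h1
    · simp
    · exact h m h1 hm
  have hi1 : (i : ℕ) + 1 ≤ n := i.2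
  have hi0 : (i : ℕ) ≤ n := le_of_lt i.2
  have h2 := key ((i : ℕ) + 1) hi1
  have h3 := key (i : ℕ) hi0
  rw [Fin.sum_univ_castSucc, Fin.sum_univ_castSucc] at h2
  have h4 : Fin.castLE hi1 (Fin.last (i : ℕ)) = i := by
    apply Fin.ext
    simp
  have h5 : ∀ f : Fin n → ℤ, ∑ j : Fin (i : ℕ), f (Fin.castLE hi1 j.castSucc)
      = ∑ j : Fin (i : ℕ), f (Fin.castLE hi0 j) := by
    intro f
    refine Finset.sum_congr rfl fun j _ => ?_
    have he : Fin.castLE hi1 j.castSucc = Fin.castLE hi0 j := by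
      apply Fin.ext
      simp
    rw [he]
  rw [h4, h5 a, h5 b, h3] at h2
  exact add_left_cancel h2

lemma map_mul_subring {O : Subring L} (X Y : Matrix (Fin n) (Fin n) O) :
    (X * Y).map (fun x : O => (x : L))
      = X.map (fun x : O => (x : L)) * Y.map (fun x : O => (x : L)) :=
  Matrix.map_mul (f := O.subtype)

lemma map_one_subring {O : Subring L} :
    (1 : Matrix (Fin n) (Fin n) O).map (fun x : O => (x : L)) = 1 :=
  Matrix.map_one _ (by simp) (by simp)

lemma map_subring_injective {O : Subring L} :
    Function.Injective (fun X : Matrix (Fin n) (Fin n) O =>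
      X.map (fun x : O => (x : L))) := by
  intro X Y h
  ext i j
  have h2 := congrFun (congrFun h i) j
  exact h2

end Final
end CartanAux

theorem stmt_0 {L : Type*} [Field L] (v : L → ℤ) (t : L)
    (hv_mul : ∀ x y : L, x ≠ 0 → y ≠ 0 → v (x * y) = v x + v y)
    (hv_add : ∀ x y : L, x ≠ 0 → y ≠ 0 → x + y ≠ 0 → min (v x) (v y) ≤ v (x + y))
    (hv_surj : ∀ n : ℤ, ∃ x : L, x ≠ 0 ∧ v x = n)
    (ht0 : t ≠ 0) (ht1 : v t = 1)
    (O : Subring L) (hO : ∀ x : L, x ∈ O ↔ x = 0 ∨ 0 ≤ v x)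
    (n : ℕ) (hn : 1 ≤ n)
    (g : Matrix (Fin n) (Fin n) L) (hg : IsUnit g.det)
    (a : Fin n → ℤ) (ha : Monotone a) :
    (∃ U V : Matrix (Fin n) (Fin n) O, IsUnit U.det ∧ IsUnit V.det ∧
        g = U.map (fun x => (x : L)) * Matrix.diagonal (fun i => t ^ (a i)) *
              V.map (fun x => (x : L)))
      ↔ ∀ k : ℕ, 1 ≤ k → ∀ hk : k ≤ n,
          IsLeast {w : ℤ | ∃ r c : Fin k → Fin n, Function.Injective r ∧ Function.Injective c ∧
              (g.submatrix r c).det ≠ 0 ∧ v ((g.submatrix r c).det) = w}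
            (∑ i : Fin k, a (Fin.castLE hk i)) := by
  have hn0 : 0 < n := hn
  have hdg : g.det ≠ 0 := hg.ne_zero
  constructor
  · rintro ⟨U, V, hU, hV, hdec⟩
    intro k hk1 hk
    obtain ⟨Wu, hWu1, hWu2⟩ : ∃ W : Matrix (Fin n) (Fin n) O, U * W = 1 ∧ W * U = 1 := by
      obtain ⟨u0, hu0⟩ := (Matrix.isUnit_iff_isUnit_det U).mpr hU
      exact ⟨↑u0⁻¹, by rw [← hu0]; exact u0.mul_inv, by rw [← hu0]; exact u0.inv_mul⟩
    obtain ⟨Wv, hWv1, hWv2⟩ : ∃ W : Matrix (Fin n) (Fin n) O, V * W = 1 ∧ W * V = 1 := by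
      obtain ⟨v0, hv0⟩ := (Matrix.isUnit_iff_isUnit_det V).mpr hV
      exact ⟨↑v0⁻¹, by rw [← hv0]; exact v0.mul_inv, by rw [← hv0]; exact v0.inv_mul⟩
    have hUW : U.map (fun x : O => (x : L)) * Wu.map (fun x : O => (x : L)) = 1 := by
      rw [← map_mul_subring, hWu1, map_one_subring]
    have hVW : V.map (fun x : O => (x : L)) * Wv.map (fun x : O => (x : L)) = 1 := by
      rw [← map_mul_subring, hWv1, map_one_subring]
    have hent : ∀ X : Matrix (Fin n) (Fin n) O, EntB v (X.map (fun x : O => (x : L))) :=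
      fun X i j => (mem_O_wv hO _).mp (X i j).2
    exact rawForward hv_mul hv_add ht0 ht1 ha (hent U) (hent V) (hent Wu) (hent Wv)
      hUW hVW hdec hdg hk
  · intro H
    obtain ⟨q0, -, hmin0⟩ := Finset.exists_min_image (Finset.univ : Finset (Fin n × Fin n))
      (fun q => wv v (g q.1 q.2)) ⟨(⟨0, hn0⟩, ⟨0, hn0⟩), Finset.mem_univ _⟩
    have hmin : ∀ i j, wv v (g q0.1 q0.2) ≤ wv v (g i j) := fun i j =>
      hmin0 (i, j) (Finset.mem_univ _)
    have hx0 : g q0.1 q0.2 ≠ 0 := by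
      intro h0
      have hz : g = 0 := by
        ext i j
        have h := hmin i j
        rw [h0, wv_zero, top_le_iff, wv_eq_top_iff] at h
        exact h
      rw [hz, (by haveI : Nonempty (Fin n) := ⟨⟨0, hn0⟩⟩; exact Matrix.det_zero : (0 : Matrix (Fin n) (Fin n) L).det = 0)] at hdg
      exact hdg rfl
    set N : ℤ := -(v (g q0.1 q0.2)) with hN
    set g' := (t ^ N : L) • g with hg'
    have hEg' : EntB v g' := by
      intro i j
      rw [hg', Matrix.smul_apply, smul_eq_mul, wv_mul hv_mul, wv_zpow hv_mul ht0 ht1]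
      calc (0 : WithTop ℤ) = (N : ℤ) + ((v (g q0.1 q0.2) : ℤ) : WithTop ℤ) := by
            rw [← WithTop.coe_add, hN]
            norm_num
        _ ≤ _ := add_le_add_right (by rw [← wv_of_ne hx0]; exact hmin i j) _
    have hdg' : g'.det ≠ 0 := by
      rw [hg', Matrix.det_smul]
      exact mul_ne_zero (pow_ne_zero _ (zpow_ne_zero _ ht0)) hdg
    obtain ⟨U, V, b, hEU, hEV, hdU, hdV, hbmono, hdec, -⟩ :=
      snf hv_mul hv_add ht0 ht1 n g' hEg' hdg'
    set b2 : Fin n → ℤ := fun i => b i - N with hb2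
    have hb2mono : Monotone b2 := fun i j hij => sub_le_sub_right (hbmono hij) N
    have hDD : (t ^ (-N) : L) • Matrix.diagonal (fun i => t ^ (b i))
        = Matrix.diagonal (fun i : Fin n => t ^ (b2 i)) := by
      rw [← Matrix.diagonal_smul]
      refine congrArg Matrix.diagonal (funext fun i => ?_)
      show (t ^ (-N) : L) * t ^ (b i) = t ^ (b2 i)
      rw [← zpow_add₀ ht0]
      congr 1
      simp [hb2]
      ring
    have hdecg : g = U * Matrix.diagonal (fun i => t ^ (b2 i)) * V := by
      calc g = (t ^ (-N) : L) • ((t ^ N : L) • g) := by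
            rw [smul_smul, ← zpow_add₀ ht0]
            norm_num
        _ = (t ^ (-N) : L) • (U * Matrix.diagonal (fun i => t ^ (b i)) * V) := by
            rw [← hg', hdec]
        _ = U * ((t ^ (-N) : L) • Matrix.diagonal (fun i => t ^ (b i))) * V := by
            rw [Matrix.mul_smul, Matrix.smul_mul]
        _ = _ := by rw [hDD]
    obtain ⟨Wu, hEWu, hUWu, hWuU⟩ := exists_inv_entB hv_mul hv_add hEU hdU
    obtain ⟨Wv, hEWv, hVWv, hWvV⟩ := exists_inv_entB hv_mul hv_add hEV hdV
    have hIs : ∀ k : ℕ, 1 ≤ k → ∀ hk : k ≤ n,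
        IsLeast {w : ℤ | ∃ r c : Fin k → Fin n, Function.Injective r ∧ Function.Injective c ∧
            (g.submatrix r c).det ≠ 0 ∧ v ((g.submatrix r c).det) = w}
          (∑ i : Fin k, b2 (Fin.castLE hk i)) := fun k hk1 hk =>
      rawForward hv_mul hv_add ht0 ht1 hb2mono hEU hEV hEWu hEWv hUWu hVWv hdecg hdg hk
    have hsums : ∀ k : ℕ, 1 ≤ k → ∀ hk : k ≤ n,
        ∑ i : Fin k, a (Fin.castLE hk i) = ∑ i : Fin k, b2 (Fin.castLE hk i) :=
      fun k h1 hk => (H k h1 hk).unique (hIs k h1 hk)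
    have hab : ∀ i, a i = b2 i := telescope hsums
    have hdiag_ab : Matrix.diagonal (fun i : Fin n => t ^ (a i))
        = Matrix.diagonal (fun i : Fin n => t ^ (b2 i)) :=
      congrArg Matrix.diagonal (funext fun i => by rw [hab i])
    set UO : Matrix (Fin n) (Fin n) O :=
      Matrix.of fun i j => (⟨U i j, (mem_O_wv hO _).mpr (hEU i j)⟩ : O) with hUO
    set VO : Matrix (Fin n) (Fin n) O :=
      Matrix.of fun i j => (⟨V i j, (mem_O_wv hO _).mpr (hEV i j)⟩ : O) with hVO
    set WuO : Matrix (Fin n) (Fin n) O :=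
      Matrix.of fun i j => (⟨Wu i j, (mem_O_wv hO _).mpr (hEWu i j)⟩ : O) with hWuO
    set WvO : Matrix (Fin n) (Fin n) O :=
      Matrix.of fun i j => (⟨Wv i j, (mem_O_wv hO _).mpr (hEWv i j)⟩ : O) with hWvO
    have hUmap : UO.map (fun x : O => (x : L)) = U := by ext i j; rfl
    have hVmap : VO.map (fun x : O => (x : L)) = V := by ext i j; rfl
    have hWumap : WuO.map (fun x : O => (x : L)) = Wu := by ext i j; rfl
    have hWvmap : WvO.map (fun x : O => (x : L)) = Wv := by ext i j; rfl
    have hUO1 : UO * WuO = 1 := by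
      apply map_subring_injective
      simp only
      rw [map_mul_subring, hUmap, hWumap, hUWu, map_one_subring]
    have hVO1 : VO * WvO = 1 := by
      apply map_subring_injective
      simp only
      rw [map_mul_subring, hVmap, hWvmap, hVWv, map_one_subring]
    refine ⟨UO, VO, Matrix.isUnit_det_of_right_inverse hUO1,
      Matrix.isUnit_det_of_right_inverse hVO1, ?_⟩
    rw [hUmap, hVmap, hdiag_ab]
    exact hdecg
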